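/- Let f, g : [0,1] → [0,1]² be continuous with f(0) = (0,0), f(1) = (1,1), g(0) = (0,1), g(1) = (1,0). Define f₁, g₁ : [-1,2] → ℝ² by f₁(t) = f(t) and g₁(t) = g(t) for t ∈ [0,1], and f₁(t) = (t,t), g₁(t) = (t, 1-t) for t ∈ [-1,0) ∪ (1,2]. Define f₂, g₂ : [0,1] → ℝ² by f₂(t) = (f₁(3t-1) + (1,1))/3 and g₂(t) = (g₁(3t-1) + (1,1))/3. Then f₂ and g₂ are continuous, take values in [0,1]², satisfy f₂(0) = (0,0), f₂(1) = (1,1), g₂(0) = (0,1), g₂(1) = (1,0), and for every t with 0 < t < 1 both f₂(t) and g₂(t) lie in the open unit square (0,1)². -/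

import Mathlib

open Set

noncomputable section

/-- The Euclidean plane. -/
abbrev E2 := EuclideanSpace ℝ (Fin 2)

/-- The point `(x, y)` of the Euclidean plane. -/
def pt (x y : ℝ) : E2 := WithLp.toLp 2 ![x, y]

/-- The closed unit square `[0,1]²`. -/
def unitSq : Set E2 := {p | p 0 ∈ Icc (0:ℝ) 1 ∧ p 1 ∈ Icc (0:ℝ) 1}

/-- The open unit square `(0,1)²`. -/
def openUnitSq : Set E2 := {p | p 0 ∈ Ioo (0:ℝ) 1 ∧ p 1 ∈ Ioo (0:ℝ) 1}

/-- `f₁ : [-1,2] → ℝ²`: extend `f` by the diagonal outside `[0,1]`. -/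
def extF (f : ℝ → E2) (t : ℝ) : E2 := if t ∈ Icc (0:ℝ) 1 then f t else pt t t

/-- `g₁ : [-1,2] → ℝ²`: extend `g` by the antidiagonal outside `[0,1]`. -/
def extG (g : ℝ → E2) (t : ℝ) : E2 := if t ∈ Icc (0:ℝ) 1 then g t else pt t (1 - t)

/-- `f₂(t) = (f₁(3t-1) + (1,1))/3`. -/
def sqF (f : ℝ → E2) (t : ℝ) : E2 := (3:ℝ)⁻¹ • (extF f (3*t - 1) + pt 1 1)

/-- `g₂(t) = (g₁(3t-1) + (1,1))/3`. -/
def sqG (g : ℝ → E2) (t : ℝ) : E2 := (3:ℝ)⁻¹ • (extG g (3*t - 1) + pt 1 1)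

@[simp] lemma pt_apply0 (a b : ℝ) : pt a b 0 = a := rfl
@[simp] lemma pt_apply1 (a b : ℝ) : pt a b 1 = b := rfl

lemma cont_diag : Continuous fun t : ℝ => pt t t := by
  have h : (fun t : ℝ => pt t t) = fun t : ℝ => t • (pt 1 1 : E2) := by
    funext t
    apply PiLp.ext
    intro i
    fin_cases i <;> simp [pt]
  rw [h]
  exact continuous_id.smul continuous_const

lemma cont_anti : Continuous fun t : ℝ => pt t (1 - t) := by
  have h : (fun t : ℝ => pt t (1 - t)) = fun t : ℝ => (pt 0 1 : E2) + t • (pt 1 (-1) : E2) := by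
    funext t
    apply PiLp.ext
    intro i
    fin_cases i <;> simp [pt] <;> ring
  rw [h]
  exact continuous_const.add (continuous_id.smul continuous_const)

lemma frontier_mem {a : ℝ} (ha : a ∈ frontier {x : ℝ | x ∈ Icc (0:ℝ) 1}) : a = 0 ∨ a = 1 := by
  have : frontier {x : ℝ | x ∈ Icc (0:ℝ) 1} = {0, 1} := by
    have : {x : ℝ | x ∈ Icc (0:ℝ) 1} = Icc (0:ℝ) 1 := rfl
    rw [this, frontier_Icc (by norm_num : (0:ℝ) ≤ 1)]
  rw [this] at ha
  simpa using ha

lemma contOn_extF (f : ℝ → E2) (hfc : ContinuousOn f (Icc 0 1))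
    (hf0 : f 0 = pt 0 0) (hf1 : f 1 = pt 1 1) :
    ContinuousOn (extF f) (Icc (-1) 2) := by
  unfold extF
  apply ContinuousOn.if
  · intro a ha
    rcases frontier_mem ha.2 with h | h <;> subst h
    · rw [hf0]
    · rw [hf1]
  · exact hfc.mono (by intro x hx; have := hx.2; rwa [show {a : ℝ | a ∈ Icc (0:ℝ) 1} = Icc 0 1 from rfl, isClosed_Icc.closure_eq] at this)
  · exact cont_diag.continuousOn

lemma contOn_extG (g : ℝ → E2) (hgc : ContinuousOn g (Icc 0 1))
    (hg0 : g 0 = pt 0 1) (hg1 : g 1 = pt 1 0) :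
    ContinuousOn (extG g) (Icc (-1) 2) := by
  unfold extG
  apply ContinuousOn.if
  · intro a ha
    rcases frontier_mem ha.2 with h | h <;> subst h
    · rw [hg0]; apply PiLp.ext; intro i; fin_cases i <;> norm_num [pt]
    · rw [hg1]; apply PiLp.ext; intro i; fin_cases i <;> norm_num [pt]
  · exact hgc.mono (by intro x hx; have := hx.2; rwa [show {a : ℝ | a ∈ Icc (0:ℝ) 1} = Icc 0 1 from rfl, isClosed_Icc.closure_eq] at this)
  · exact cont_anti.continuousOn

lemma affine_maps : MapsTo (fun t : ℝ => 3*t - 1) (Icc 0 1) (Icc (-1) 2) := by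
  intro t ht
  simp only [mem_Icc]
  constructor <;> linarith [ht.1, ht.2]

lemma affine_cont : Continuous fun t : ℝ => 3*t - 1 := by continuity

set_option maxHeartbeats 1000000 in
/-- The rescaled extensions `f₂, g₂` are continuous paths in the unit square joining
opposite corners, whose interiors lie in the open unit square. -/
theorem extension_properties (f g : ℝ → E2)
    (hfc : ContinuousOn f (Icc 0 1)) (hgc : ContinuousOn g (Icc 0 1))
    (hfm : MapsTo f (Icc 0 1) unitSq) (hgm : MapsTo g (Icc 0 1) unitSq)
    (hf0 : f 0 = pt 0 0) (hf1 : f 1 = pt 1 1)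
    (hg0 : g 0 = pt 0 1) (hg1 : g 1 = pt 1 0) :
    ContinuousOn (sqF f) (Icc 0 1) ∧ ContinuousOn (sqG g) (Icc 0 1) ∧
    MapsTo (sqF f) (Icc 0 1) unitSq ∧ MapsTo (sqG g) (Icc 0 1) unitSq ∧
    sqF f 0 = pt 0 0 ∧ sqF f 1 = pt 1 1 ∧
    sqG g 0 = pt 0 1 ∧ sqG g 1 = pt 1 0 ∧
    (∀ t ∈ Ioo (0:ℝ) 1, sqF f t ∈ openUnitSq ∧ sqG g t ∈ openUnitSq) := by
  have hF : ContinuousOn (sqF f) (Icc 0 1) := by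
    unfold sqF
    exact (((contOn_extF f hfc hf0 hf1).comp affine_cont.continuousOn affine_maps).add
      continuousOn_const).const_smul (3:ℝ)⁻¹
  have hG : ContinuousOn (sqG g) (Icc 0 1) := by
    unfold sqG
    exact (((contOn_extG g hgc hg0 hg1).comp affine_cont.continuousOn affine_maps).add
      continuousOn_const).const_smul (3:ℝ)⁻¹
  -- coordinate computations
  have coordF : ∀ t : ℝ, (sqF f t) 0 = 3⁻¹ * (extF f (3*t-1) 0 + 1) ∧
      (sqF f t) 1 = 3⁻¹ * (extF f (3*t-1) 1 + 1) := by
    intro t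
    exact ⟨rfl, rfl⟩
  have coordG : ∀ t : ℝ, (sqG g t) 0 = 3⁻¹ * (extG g (3*t-1) 0 + 1) ∧
      (sqG g t) 1 = 3⁻¹ * (extG g (3*t-1) 1 + 1) := by
    intro t
    exact ⟨rfl, rfl⟩
  -- interior membership in the open square
  have hFopen : ∀ t ∈ Ioo (0:ℝ) 1, sqF f t ∈ openUnitSq := by
    intro t ht
    obtain ⟨h0, h1⟩ := coordF t
    set s := 3*t - 1 with hs
    have hs1 : -1 < s := by simp [hs]; linarith [ht.1]
    have hs2 : s < 2 := by simp [hs]; linarith [ht.2]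
    by_cases hmem : s ∈ Icc (0:ℝ) 1
    · have hval := hfm hmem
      have e0 : extF f s 0 = f s 0 := by simp [extF, hmem]
      have e1 : extF f s 1 = f s 1 := by simp [extF, hmem]
      constructor
      · rw [h0, e0]
        constructor <;> nlinarith [hval.1.1, hval.1.2]
      · rw [h1, e1]
        constructor <;> nlinarith [hval.2.1, hval.2.2]
    · have e0 : extF f s 0 = s := by simp [extF, hmem]
      have e1 : extF f s 1 = s := by simp [extF, hmem]
      constructor
      · rw [h0, e0]; constructor <;> nlinarith
      · rw [h1, e1]; constructor <;> nlinarith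
  have hGopen : ∀ t ∈ Ioo (0:ℝ) 1, sqG g t ∈ openUnitSq := by
    intro t ht
    obtain ⟨h0, h1⟩ := coordG t
    set s := 3*t - 1 with hs
    have hs1 : -1 < s := by simp [hs]; linarith [ht.1]
    have hs2 : s < 2 := by simp [hs]; linarith [ht.2]
    by_cases hmem : s ∈ Icc (0:ℝ) 1
    · have hval := hgm hmem
      have e0 : extG g s 0 = g s 0 := by simp [extG, hmem]
      have e1 : extG g s 1 = g s 1 := by simp [extG, hmem]
      constructor
      · rw [h0, e0]
        constructor <;> nlinarith [hval.1.1, hval.1.2]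
      · rw [h1, e1]
        constructor <;> nlinarith [hval.2.1, hval.2.2]
    · have e0 : extG g s 0 = s := by simp [extG, hmem]
      have e1 : extG g s 1 = 1 - s := by simp [extG, hmem]
      constructor
      · rw [h0, e0]; constructor <;> nlinarith
      · rw [h1, e1]; constructor <;> nlinarith
  -- maps into closed square
  have hFm : MapsTo (sqF f) (Icc 0 1) unitSq := by
    intro t ht
    obtain ⟨h0, h1⟩ := coordF t
    set s := 3*t - 1 with hs
    by_cases hmem : s ∈ Icc (0:ℝ) 1
    · have hval := hfm hmem
      have e0 : extF f s 0 = f s 0 := by simp [extF, hmem]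
      have e1 : extF f s 1 = f s 1 := by simp [extF, hmem]
      refine ⟨?_, ?_⟩
      · rw [h0, e0]; constructor <;> nlinarith [hval.1.1, hval.1.2]
      · rw [h1, e1]; constructor <;> nlinarith [hval.2.1, hval.2.2]
    · have hs1 : -1 ≤ s := by simp [hs]; linarith [ht.1]
      have hs2 : s ≤ 2 := by simp [hs]; linarith [ht.2]
      have e0 : extF f s 0 = s := by simp [extF, hmem]
      have e1 : extF f s 1 = s := by simp [extF, hmem]
      refine ⟨?_, ?_⟩
      · rw [h0, e0]; constructor <;> nlinarith
      · rw [h1, e1]; constructor <;> nlinarith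
  have hGm : MapsTo (sqG g) (Icc 0 1) unitSq := by
    intro t ht
    obtain ⟨h0, h1⟩ := coordG t
    set s := 3*t - 1 with hs
    by_cases hmem : s ∈ Icc (0:ℝ) 1
    · have hval := hgm hmem
      have e0 : extG g s 0 = g s 0 := by simp [extG, hmem]
      have e1 : extG g s 1 = g s 1 := by simp [extG, hmem]
      refine ⟨?_, ?_⟩
      · rw [h0, e0]; constructor <;> nlinarith [hval.1.1, hval.1.2]
      · rw [h1, e1]; constructor <;> nlinarith [hval.2.1, hval.2.2]
    · have hs1 : -1 ≤ s := by simp [hs]; linarith [ht.1]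
      have hs2 : s ≤ 2 := by simp [hs]; linarith [ht.2]
      have e0 : extG g s 0 = s := by simp [extG, hmem]
      have e1 : extG g s 1 = 1 - s := by simp [extG, hmem]
      refine ⟨?_, ?_⟩
      · rw [h0, e0]; constructor <;> nlinarith
      · rw [h1, e1]; constructor <;> nlinarith
  -- endpoint values
  have hmem0 : (3*(0:ℝ) - 1) ∉ Icc (0:ℝ) 1 := by norm_num
  have hmem1 : (3*(1:ℝ) - 1) ∉ Icc (0:ℝ) 1 := by norm_num
  have eF0 : sqF f 0 = pt 0 0 := by
    apply PiLp.ext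
    intro i
    fin_cases i <;> simp [sqF, extF, hmem0, pt] <;> norm_num
  have eF1 : sqF f 1 = pt 1 1 := by
    apply PiLp.ext
    intro i
    fin_cases i <;> simp [sqF, extF, hmem1, pt] <;> norm_num
  have eG0 : sqG g 0 = pt 0 1 := by
    apply PiLp.ext
    intro i
    fin_cases i <;> simp [sqG, extG, hmem0, pt] <;> norm_num
  have eG1 : sqG g 1 = pt 1 0 := by
    apply PiLp.ext
    intro i
    fin_cases i <;> simp [sqG, extG, hmem1, pt] <;> norm_num
  exact ⟨hF, hG, hFm, hGm, eF0, eF1, eG0, eG1, fun t ht => ⟨hFopen t ht, hGopen t ht⟩⟩
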